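/- With A(n)=n+2 and B(n)=(n+2)·∑_{i=2}^{n+2} (-1)^i/i!, the sequence A(n)/B(n) converges to e as n → ∞. -/

import Mathlib

theorem stmt4 :
    Filter.Tendsto (fun n : ℕ =>
      ((n : ℝ) + 2) /
        (((n : ℝ) + 2) * ∑ i ∈ Finset.Icc 2 (n + 2), (-1 : ℝ) ^ i / (Nat.factorial i : ℝ)))
      Filter.atTop (nhds (Real.exp 1)) := by
  have hsum : HasSum (fun n : ℕ => (-1 : ℝ) ^ n / (Nat.factorial n : ℝ)) (Real.exp (-1)) := by
    have := NormedSpace.expSeries_div_hasSum_exp (-1 : ℝ)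
    rwa [← Real.exp_eq_exp_ℝ] at this
  have htend : Filter.Tendsto
      (fun n : ℕ => ∑ i ∈ Finset.range n, (-1 : ℝ) ^ i / (Nat.factorial i : ℝ))
      Filter.atTop (nhds (Real.exp (-1))) := hsum.tendsto_sum_nat
  have htend2 : Filter.Tendsto
      (fun n : ℕ => ∑ i ∈ Finset.Icc 2 (n + 2), (-1 : ℝ) ^ i / (Nat.factorial i : ℝ))
      Filter.atTop (nhds (Real.exp (-1))) := by
    have key : ∀ n : ℕ, ∑ i ∈ Finset.Icc 2 (n + 2), (-1 : ℝ) ^ i / (Nat.factorial i : ℝ)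
        = ∑ i ∈ Finset.range (n + 3), (-1 : ℝ) ^ i / (Nat.factorial i : ℝ) := by
      intro n
      rw [Finset.range_eq_Ico, ← Finset.sum_Ico_consecutive _ (by norm_num : 0 ≤ 2)
        (by omega : 2 ≤ n + 3)]
      have : ∑ i ∈ Finset.Ico 0 2, (-1 : ℝ) ^ i / (Nat.factorial i : ℝ) = 0 := by
        rw [show (2:ℕ) = 0 + 2 from rfl, Finset.sum_Ico_eq_sum_range]
        simp [Finset.sum_range_succ]
      rw [this, zero_add]
      rw [show n + 3 = n + 2 + 1 from rfl, Finset.Ico_add_one_right_eq_Icc]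
    simp only [key]
    exact htend.comp (Filter.tendsto_add_atTop_nat 3)
  have hne : Real.exp (-1) ≠ 0 := Real.exp_ne_zero _
  have : Filter.Tendsto
      (fun n : ℕ => (1 : ℝ) / ∑ i ∈ Finset.Icc 2 (n + 2), (-1 : ℝ) ^ i / (Nat.factorial i : ℝ))
      Filter.atTop (nhds (1 / Real.exp (-1))) :=
    Filter.Tendsto.div tendsto_const_nhds htend2 hne
  have hval : (1 : ℝ) / Real.exp (-1) = Real.exp 1 := by
    rw [Real.exp_neg, one_div, inv_inv]
  rw [hval] at this
  convert this using 2 with n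
  rw [div_mul_eq_div_div_swap, div_right_comm,
    div_self (by positivity : ((n : ℝ) + 2) ≠ 0)]
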